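/- Let C be a commutative ℚ-algebra and λ ∈ C, and let e_λ(x) = ∑_{k=1}^{∞} λ^{k−1}·x^k/k! ∈ C[[x]]. Then for every n ∈ ℕ, in C[[x,y]]: e_λ(x+y)^n = ∑_{k=0}^{n} λ^k ∑_{i=0}^{n} binom(n, i)·binom(i, k)·e_λ(x)^{n+k−i}·e_λ(y)^{i}. That is, {e_λ(x)^n}_{n∈ℕ} is a sequence of λ-binomial type. -/

import Mathlib

open Finset PowerSeries

/-- `e_λ(x) = ∑_{k=1}^{∞} λ^{k−1}·x^k/k! ∈ C[[x]]`. -/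
noncomputable def elam {C : Type*} [CommRing C] [Algebra ℚ C] (lam : C) : PowerSeries C :=
  PowerSeries.mk fun k => if k = 0 then 0 else ((k.factorial : ℚ)⁻¹) • lam ^ (k - 1)

/-- Substitution of a two-variable power series `g` (with zero constant term) into a
one-variable power series `f`, i.e. `f(g) = ∑_k (coeff k f)·g^k`, defined coefficientwise:
the coefficient of the monomial `d` only receives contributions from `k ≤ |d|`. -/
noncomputable def substInto {C : Type*} [CommRing C] (g : MvPowerSeries (Fin 2) C)
    (f : PowerSeries C) : MvPowerSeries (Fin 2) C :=
  fun d => ∑ k ∈ Finset.range (d.sum (fun _ e => e) + 1),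
    PowerSeries.coeff k f * MvPowerSeries.coeff d (g ^ k)


section Aux


lemma ring_alg {R : Type*} [CommRing R] (l u v : R) (n : ℕ) :
    (u + v + l * (u * v)) ^ n =
      ∑ k ∈ range (n + 1), l ^ k *
        ∑ i ∈ range (n + 1), (n.choose i : R) * (i.choose k : R) * (u ^ (n + k - i) * v ^ i) := by
  have h1 : u + v + l * (u * v) = (1 + l * u) * v + u := by ring
  rw [h1, add_pow]
  have h2 : ∀ i ∈ range (n + 1),
      ((1 + l * u) * v) ^ i * u ^ (n - i) * (n.choose i : R) =
      ∑ k ∈ range (n + 1), l ^ k * ((n.choose i : R) * (i.choose k : R) * (u ^ (n + k - i) * v ^ i)) := by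
    intro i hi
    rw [mem_range, Nat.lt_succ_iff] at hi
    have e1 : (1 + l * u) ^ i = ∑ k ∈ range (n + 1), (l * u) ^ k * (i.choose k : R) := by
      rw [add_comm (1 : R), add_pow]
      simp only [one_pow, mul_one]
      refine Finset.sum_subset (Finset.range_subset_range.mpr (by omega)) ?_
      intro k _ hk
      rw [mem_range, Nat.lt_succ_iff] at hk
      rw [Nat.choose_eq_zero_of_lt (by omega), Nat.cast_zero, mul_zero]
    rw [mul_pow, e1, sum_mul, sum_mul, sum_mul]
    refine Finset.sum_congr rfl fun k _ => ?_
    have : n + k - i = k + (n - i) := by omega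
    rw [this, pow_add, mul_pow]
    ring
  rw [Finset.sum_congr rfl h2, Finset.sum_comm]
  exact Finset.sum_congr rfl fun k _ => (Finset.mul_sum _ _ _).symm

variable {C : Type*} [CommRing C]

lemma degsum (d : Fin 2 →₀ ℕ) : d.sum (fun _ e => e) = d 0 + d 1 := by
  rw [Finsupp.sum_fintype _ _ (fun _ => rfl), Fin.sum_univ_two]

lemma single_eq_iff (s t : Fin 2) (hst : s ≠ t) (k : ℕ) (d : Fin 2 →₀ ℕ) :
    Finsupp.single s k = d ↔ k = d s ∧ d t = 0 := by
  constructor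
  · rintro rfl
    simp [Finsupp.single_apply, hst]
  · rintro ⟨rfl, h⟩
    ext x
    have : x = s ∨ x = t := by omega
    rcases this with rfl | rfl <;> simp [Finsupp.single_apply, hst, h, Ne.symm hst]

lemma coeff_substInto_X (s t : Fin 2) (hst : s ≠ t) (f : PowerSeries C) (d : Fin 2 →₀ ℕ) :
    MvPowerSeries.coeff d (substInto (MvPowerSeries.X s) f) =
      if d t = 0 then PowerSeries.coeff (d s) f else 0 := by
  rw [MvPowerSeries.coeff_apply]
  show (∑ k ∈ Finset.range (d.sum (fun _ e => e) + 1), _) = _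
  simp only [MvPowerSeries.X_pow_eq, MvPowerSeries.coeff_monomial]
  by_cases h : d t = 0
  · simp only [h, if_true]
    have hds : d s ∈ Finset.range (d.sum (fun _ e => e) + 1) := by
      rw [degsum, Finset.mem_range]
      fin_cases s <;> fin_cases t <;> simp_all <;> omega
    rw [Finset.sum_eq_single (d s)]
    · rw [if_pos (by rw [eq_comm, single_eq_iff s t hst]; exact ⟨rfl, h⟩), mul_one]
    · intro k _ hk
      rw [if_neg, mul_zero]
      rw [eq_comm, single_eq_iff s t hst]
      tauto
    · intro h'
      exact absurd hds h'
  · rw [if_neg h]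
    refine Finset.sum_eq_zero fun k _ => ?_
    rw [if_neg, mul_zero]
    rw [eq_comm, single_eq_iff s t hst]
    tauto



lemma coeff_addX_pow (k : ℕ) (d : Fin 2 →₀ ℕ) :
    MvPowerSeries.coeff d ((MvPowerSeries.X 0 + MvPowerSeries.X 1) ^ k) =
      if k = d 0 + d 1 then (k.choose (d 0) : C) else 0 := by
  rw [add_pow]
  rw [map_sum]
  have hterm : ∀ j, (MvPowerSeries.X (0 : Fin 2) : MvPowerSeries (Fin 2) C) ^ j *
      MvPowerSeries.X 1 ^ (k - j) * (k.choose j : MvPowerSeries (Fin 2) C) =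
      MvPowerSeries.monomial (Finsupp.single 0 j + Finsupp.single 1 (k - j)) (k.choose j : C) := by
    intro j
    rw [MvPowerSeries.X_pow_eq, MvPowerSeries.X_pow_eq, MvPowerSeries.monomial_mul_monomial,
      one_mul]
    rw [← map_natCast (MvPowerSeries.C (σ := Fin 2) (R := C)) (k.choose j),
      ← MvPowerSeries.monomial_zero_eq_C_apply, MvPowerSeries.monomial_mul_monomial, add_zero,
      one_mul]
  simp only [hterm, MvPowerSeries.coeff_monomial]
  have hcond : ∀ j, (d = Finsupp.single 0 j + Finsupp.single 1 (k - j)) ↔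
      (j = d 0 ∧ k - j = d 1) := by
    intro j
    constructor
    · rintro rfl; simp
    · rintro ⟨rfl, h⟩
      ext x
      fin_cases x <;> simp [h]
  by_cases hk : k = d 0 + d 1
  · rw [if_pos hk]
    rw [Finset.sum_eq_single (d 0)]
    · rw [if_pos ((hcond _).mpr ⟨rfl, by omega⟩)]
    · intro j _ hj
      rw [if_neg]
      rw [hcond]; tauto
    · intro h'
      exact absurd (Finset.mem_range.mpr (by omega)) h'
  · rw [if_neg hk]
    refine Finset.sum_eq_zero fun j hj => ?_
    rw [Finset.mem_range] at hj
    rw [if_neg]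
    rw [hcond]
    rintro ⟨rfl, h⟩
    omega

lemma coeff_substInto_addX (f : PowerSeries C) (d : Fin 2 →₀ ℕ) :
    MvPowerSeries.coeff d (substInto (MvPowerSeries.X 0 + MvPowerSeries.X 1) f) =
      PowerSeries.coeff (d 0 + d 1) f * ((d 0 + d 1).choose (d 0) : C) := by
  rw [MvPowerSeries.coeff_apply]
  show (∑ k ∈ Finset.range (d.sum (fun _ e => e) + 1), _) = _
  simp only [coeff_addX_pow, degsum]
  rw [Finset.sum_eq_single (d 0 + d 1)]
  · rw [if_pos rfl]
  · intro k _ hk; rw [if_neg hk, mul_zero]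
  · intro h; exact absurd (Finset.mem_range.mpr (by omega)) h

lemma coeff_substInto_mul (f : PowerSeries C) (d : Fin 2 →₀ ℕ) :
    MvPowerSeries.coeff d
        (substInto (MvPowerSeries.X 0) f * substInto (MvPowerSeries.X 1) f) =
      PowerSeries.coeff (d 0) f * PowerSeries.coeff (d 1) f := by
  rw [MvPowerSeries.coeff_mul]
  have hmem : (Finsupp.single (0 : Fin 2) (d 0), Finsupp.single (1 : Fin 2) (d 1)) ∈
      Finset.HasAntidiagonal.antidiagonal d := by
    rw [Finset.HasAntidiagonal.mem_antidiagonal]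
    ext x; fin_cases x <;> simp
  rw [Finset.sum_eq_single (Finsupp.single (0 : Fin 2) (d 0), Finsupp.single (1 : Fin 2) (d 1))]
  · rw [coeff_substInto_X 0 1 (by decide), coeff_substInto_X 1 0 (by decide)]
    simp [Finsupp.single_apply]
  · rintro ⟨p, q⟩ hpq hne
    rw [Finset.HasAntidiagonal.mem_antidiagonal] at hpq
    rw [coeff_substInto_X 0 1 (by decide), coeff_substInto_X 1 0 (by decide)]
    by_cases h1 : p 1 = 0
    · by_cases h2 : q 0 = 0
      · exfalso
        apply hne
        have hp : p = Finsupp.single (0 : Fin 2) (d 0) := by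
          ext x
          have h0 : p 0 + q 0 = d 0 := by rw [← hpq]; simp
          fin_cases x <;> simp [Finsupp.single_apply] <;> omega
        have hq : q = Finsupp.single (1 : Fin 2) (d 1) := by
          ext x
          have h0 : p 1 + q 1 = d 1 := by rw [← hpq]; simp
          fin_cases x <;> simp [Finsupp.single_apply] <;> omega
        rw [hp, hq]
      · rw [if_neg h2, mul_zero]
    · rw [if_neg h1, zero_mul]
  · intro h; exact absurd hmem h

lemma coeff_elam {C : Type*} [CommRing C] [Algebra ℚ C] (lam : C) (k : ℕ) :
    PowerSeries.coeff k (elam lam) =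
      if k = 0 then 0 else ((k.factorial : ℚ)⁻¹) • lam ^ (k - 1) := by
  simp [elam]

lemma key_identity {C : Type*} [CommRing C] [Algebra ℚ C] (lam : C) :
    substInto (MvPowerSeries.X 0 + MvPowerSeries.X 1) (elam lam) =
      substInto (MvPowerSeries.X 0) (elam lam) + substInto (MvPowerSeries.X 1) (elam lam) +
        lam • (substInto (MvPowerSeries.X 0) (elam lam) *
          substInto (MvPowerSeries.X 1) (elam lam)) := by
  ext d
  rw [map_add, map_add, LinearMap.map_smul, coeff_substInto_addX, coeff_substInto_mul,
    coeff_substInto_X 0 1 (by decide), coeff_substInto_X 1 0 (by decide)]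
  simp only [coeff_elam, smul_eq_mul]
  set a := d 0; set b := d 1
  by_cases ha : a = 0 <;> by_cases hb : b = 0
  · simp [ha, hb]
  · simp only [ha, hb, if_true, if_false, zero_add, Nat.choose_zero_right, Nat.cast_one,
      mul_one, if_neg hb]
    simp
  · simp only [ha, hb, if_false, if_true, add_zero, Nat.choose_self, Nat.cast_one, mul_one,
      if_neg ha]
    simp
  · rw [if_neg (by omega : ¬ a + b = 0), if_neg ha, if_neg hb, if_neg ha, if_neg hb]
    rw [zero_add, zero_add]
    have hch : ((a + b).choose a : C) = algebraMap ℚ C ((a + b).choose a : ℚ) := by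
      rw [map_natCast]
    rw [hch, Algebra.smul_def, Algebra.smul_def, Algebra.smul_def]
    have hq : (((a + b).factorial : ℚ))⁻¹ * ((a + b).choose a : ℚ) =
        ((a.factorial : ℚ))⁻¹ * ((b.factorial : ℚ))⁻¹ := by
      have h := Nat.choose_mul_factorial_mul_factorial (Nat.le_add_right a b)
      rw [Nat.add_sub_cancel_left] at h
      field_simp
      push_cast [← h]; ring
    calc algebraMap ℚ C (((a + b).factorial : ℚ))⁻¹ * lam ^ (a + b - 1) *
          algebraMap ℚ C ((a + b).choose a : ℚ)
        = algebraMap ℚ C ((((a + b).factorial : ℚ))⁻¹ * ((a + b).choose a : ℚ)) *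
            lam ^ (a + b - 1) := by rw [map_mul]; ring
      _ = algebraMap ℚ C (((a.factorial : ℚ))⁻¹ * ((b.factorial : ℚ))⁻¹) *
            lam ^ (a + b - 1) := by rw [hq]
      _ = lam * (algebraMap ℚ C ((a.factorial : ℚ))⁻¹ * lam ^ (a - 1) *
            (algebraMap ℚ C ((b.factorial : ℚ))⁻¹ * lam ^ (b - 1))) := by
          rw [map_mul]
          have : lam ^ (a + b - 1) = lam * (lam ^ (a - 1) * lam ^ (b - 1)) := by
            rw [← pow_add, ← pow_succ']
            congr 1
            omega
          rw [this]; ring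

end Aux

/-- `{e_λ(x)^n}` is a sequence of `λ`-binomial type: in `C[[x,y]]`,
`e_λ(x+y)^n = ∑_{k=0}^{n} λ^k ∑_{i=0}^{n} binom(n,i)·binom(i,k)·e_λ(x)^{n+k−i}·e_λ(y)^{i}`. -/
theorem elam_pow_lambda_binomial {C : Type*} [CommRing C] [Algebra ℚ C] (lam : C) (n : ℕ) :
    (substInto (MvPowerSeries.X 0 + MvPowerSeries.X 1) (elam lam)) ^ n =
      ∑ k ∈ Finset.range (n + 1), lam ^ k •
        ∑ i ∈ Finset.range (n + 1), ((n.choose i : C) * (i.choose k : C)) •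
          ((substInto (MvPowerSeries.X 0) (elam lam)) ^ (n + k - i) *
            (substInto (MvPowerSeries.X 1) (elam lam)) ^ i) := by
  rw [key_identity, Algebra.smul_def, ring_alg]
  refine Finset.sum_congr rfl fun k _ => ?_
  rw [Algebra.smul_def, map_pow, Finset.mul_sum, Finset.mul_sum]
  refine Finset.sum_congr rfl fun i _ => ?_
  rw [Algebra.smul_def, map_mul, map_natCast, map_natCast]
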